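/- For every x ∈ {1, …, L}, the commutator identity a_x ζ† − ζ† a_x = −2 b_x† holds. -/

import Mathlib

noncomputable section

/-- `w_x = sin(δ/2)` for odd `x`, `cos(δ/2)` for even `x`. -/
def wR (δ : ℝ) (x : ℕ) : ℝ := if Odd x then Real.sin (δ/2) else Real.cos (δ/2)

/-- The antisymmetric coefficient matrix `F_{x,y}`. -/
def Fc (L : ℕ) (δ : ℝ) (x y : ℕ) : ℂ :=
  if y = x + 1 ∨ (x = 1 ∧ y = L) then -(Real.sin δ) / 2
  else if x = y + 1 ∨ (x = L ∧ y = 1) then (Real.sin δ) / 2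
  else 0

variable {V : Type*} [AddCommGroup V] [Module ℂ V]

/-- `a_x = w_{x+1} c_x − w_x c_{x+1}` for `1 ≤ x ≤ L−1`, and `a_L = w_2 c_1 + w_{L−1} c_L`. -/
def aOp (L : ℕ) (δ : ℝ) (c : ℕ → Module.End ℂ V) (x : ℕ) : Module.End ℂ V :=
  if x = L then (wR δ 2 : ℂ) • c 1 + (wR δ (L-1) : ℂ) • c L
  else (wR δ (x+1) : ℂ) • c x - (wR δ x : ℂ) • c (x+1)

/-- `b_x = w_x c_x + w_{x+1} c_{x+1}` for `1 ≤ x ≤ L−1`, and `b_L = −w_1 c_1 + w_L c_L`. -/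
def bOp (L : ℕ) (δ : ℝ) (c : ℕ → Module.End ℂ V) (x : ℕ) : Module.End ℂ V :=
  if x = L then (-(wR δ 1) : ℂ) • c 1 + (wR δ L : ℂ) • c L
  else (wR δ x : ℂ) • c x + (wR δ (x+1) : ℂ) • c (x+1)

/-- `ã_x = (1/sin δ)(Σ_{y=1}^{x} w_y c_y − Σ_{y=x+1}^{L} w_y c_y)` for `1 ≤ x ≤ L−1`,
and `ã_L = (1/sin δ) Σ_{y=1}^{L} w_y c_y`. -/
def taOp (L : ℕ) (δ : ℝ) (c : ℕ → Module.End ℂ V) (x : ℕ) : Module.End ℂ V :=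
  if x = L then ((Real.sin δ : ℂ))⁻¹ • ∑ y ∈ Finset.Icc 1 L, (wR δ y : ℂ) • c y
  else ((Real.sin δ : ℂ))⁻¹ •
    (∑ y ∈ Finset.Icc 1 x, (wR δ y : ℂ) • c y - ∑ y ∈ Finset.Icc (x+1) L, (wR δ y : ℂ) • c y)

/-- The pair operator `ζ† = Σ_{x,y=1}^{L} F_{x,y} ã_x† ã_y†`. -/
def zetaDag (L : ℕ) (δ : ℝ) (cdag : ℕ → Module.End ℂ V) : Module.End ℂ V :=
  ∑ x ∈ Finset.Icc 1 L, ∑ y ∈ Finset.Icc 1 L,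
    Fc L δ x y • (taOp L δ cdag x * taOp L δ cdag y)

/-! ### Auxiliary lemmas -/

/-- sign coefficient: all `+1` if `v = L`; else `+1` for `y ≤ v`, `-1` for `y > v`. -/
def sgC (L v y : ℕ) : ℂ := if v = L then 1 else if y ≤ v then 1 else -1

lemma wmul (δ : ℝ) (x : ℕ) : wR δ x * wR δ (x+1) = Real.sin δ / 2 := by
  have h2 : Real.sin δ = 2 * Real.sin (δ/2) * Real.cos (δ/2) := by
    rw [show δ = 2*(δ/2) by ring, Real.sin_two_mul]; ring_nf
  unfold wR
  rcases Nat.even_or_odd x with hx | hx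
  · simp [Nat.odd_add_one, hx, Nat.not_odd_iff_even.mpr hx]; linarith
  · simp [Nat.odd_add_one, hx]; linarith

lemma sin_ne (δ : ℝ) (hδ0 : 0 < δ) (hδ1 : δ ≤ Real.pi / 2) : (Real.sin δ : ℂ) ≠ 0 := by
  have : 0 < Real.sin δ := Real.sin_pos_of_pos_of_lt_pi hδ0
    (lt_of_le_of_lt hδ1 (by linarith [Real.pi_pos]))
  exact_mod_cast ne_of_gt this

lemma comm_mul (A B C : Module.End ℂ V) (α β : ℂ)
    (hB : A*B + B*A = α • (1 : Module.End ℂ V)) (hC : A*C + C*A = β • (1 : Module.End ℂ V)) :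
    A*(B*C) - (B*C)*A = α • C - β • B := by
  have h : A*(B*C) - (B*C)*A = (A*B + B*A)*C - B*(A*C + C*A) := by noncomm_ring
  rw [h, hB, hC, smul_mul_assoc, one_mul, mul_smul_comm, mul_one]

lemma ta_expand (L : ℕ) (δ : ℝ) (d : ℕ → Module.End ℂ V) (v : ℕ) (hv : v ∈ Finset.Icc 1 L) :
    taOp L δ d v
      = ((Real.sin δ : ℂ))⁻¹ • ∑ y ∈ Finset.Icc 1 L, (sgC L v y * (wR δ y : ℂ)) • d y := by
  unfold taOp
  by_cases h : v = L
  · subst h; simp [sgC]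
  · rw [if_neg h]
    congr 1
    have hvL : v ≤ L := by simp [Finset.mem_Icc] at hv; omega
    have hsplit : Finset.Icc 1 L = Finset.Icc 1 v ∪ Finset.Icc (v+1) L := by
      ext t; simp [Finset.mem_Icc]; omega
    have hdisj : Disjoint (Finset.Icc 1 v) (Finset.Icc (v+1) L) := by
      rw [Finset.disjoint_left]; intro t ht ht'
      simp [Finset.mem_Icc] at ht ht'; omega
    rw [hsplit, Finset.sum_union hdisj]
    have h1 : ∀ y ∈ Finset.Icc 1 v, (sgC L v y * (wR δ y : ℂ)) • d y = (wR δ y : ℂ) • d y := by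
      intro y hy; simp [Finset.mem_Icc] at hy
      simp [sgC, h, hy.2]
    have h2 : ∀ y ∈ Finset.Icc (v+1) L,
        (sgC L v y * (wR δ y : ℂ)) • d y = -((wR δ y : ℂ) • d y) := by
      intro y hy; simp [Finset.mem_Icc] at hy
      have : ¬ (y ≤ v) := by omega
      simp [sgC, h, this]
    rw [Finset.sum_congr rfl h1, Finset.sum_congr rfl h2, Finset.sum_neg_distrib]
    ring_nf
    abel

lemma acomm_c_ta (L : ℕ) (δ : ℝ) (c cdag : ℕ → Module.End ℂ V)
    (car_dc : ∀ x ∈ Finset.Icc 1 L, ∀ y ∈ Finset.Icc 1 L,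
      cdag x * c y + c y * cdag x = if x = y then 1 else 0)
    (z : ℕ) (hz : z ∈ Finset.Icc 1 L) (u : ℕ) (hu : u ∈ Finset.Icc 1 L) :
    c z * taOp L δ cdag u + taOp L δ cdag u * c z
      = (((Real.sin δ : ℂ))⁻¹ * sgC L u z * (wR δ z : ℂ)) • (1 : Module.End ℂ V) := by
  rw [ta_expand L δ cdag u hu]
  rw [mul_smul_comm, smul_mul_assoc, ← smul_add, Finset.mul_sum, Finset.sum_mul,
    ← Finset.sum_add_distrib]
  have hterm : ∀ y ∈ Finset.Icc 1 L,
      c z * ((sgC L u y * (wR δ y : ℂ)) • cdag y) + ((sgC L u y * (wR δ y : ℂ)) • cdag y) * c z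
        = if y = z then (sgC L u y * (wR δ y : ℂ)) • (1 : Module.End ℂ V) else 0 := by
    intro y hy
    rw [mul_smul_comm, smul_mul_assoc, ← smul_add]
    have := car_dc y hy z hz
    rw [show c z * cdag y + cdag y * c z = cdag y * c z + c z * cdag y from add_comm _ _, this]
    split_ifs with hyz
    · rfl
    · simp
  rw [Finset.sum_congr rfl hterm, Finset.sum_ite_eq' (Finset.Icc 1 L) z
    (fun y => (sgC L u y * (wR δ y : ℂ)) • (1 : Module.End ℂ V)), if_pos hz,
    smul_smul, mul_assoc]

lemma scal_sub (s σ1 σ2 w1 w2 : ℂ) (hs : s ≠ 0) (hww : w1 * w2 = s/2) :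
    w2 * (s⁻¹ * σ1 * w1) - w1 * (s⁻¹ * σ2 * w2) = (σ1 - σ2)/2 := by
  have h1 : s⁻¹ * s = 1 := inv_mul_cancel₀ hs
  linear_combination (s⁻¹ * (σ1 - σ2)) * hww + ((σ1 - σ2)/2) * h1

lemma scal_add (s σ1 σ2 w1 w2 w3 w4 : ℂ) (hs : s ≠ 0) (h12 : w1 * w2 = s/2)
    (h34 : w3 * w4 = s/2) :
    w2 * (s⁻¹ * σ1 * w1) + w3 * (s⁻¹ * σ2 * w4) = (σ1 + σ2)/2 := by
  have h1 : s⁻¹ * s = 1 := inv_mul_cancel₀ hs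
  linear_combination (s⁻¹ * σ1) * h12 + (s⁻¹ * σ2) * h34 + ((σ1 + σ2)/2) * h1

lemma acomm_a_ta (L : ℕ) (hL3 : 3 ≤ L) (δ : ℝ)
    (hδ0 : 0 < δ) (hδ1 : δ ≤ Real.pi / 2) (c cdag : ℕ → Module.End ℂ V)
    (car_dc : ∀ x ∈ Finset.Icc 1 L, ∀ y ∈ Finset.Icc 1 L,
      cdag x * c y + c y * cdag x = if x = y then 1 else 0)
    (x : ℕ) (hx : x ∈ Finset.Icc 1 L) (u : ℕ) (hu : u ∈ Finset.Icc 1 L) :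
    aOp L δ c x * taOp L δ cdag u + taOp L δ cdag u * aOp L δ c x
      = (if u = x then (1:ℂ) else 0) • (1 : Module.End ℂ V) := by
  have hs := sin_ne δ hδ0 hδ1
  simp only [Finset.mem_Icc] at hx hu
  by_cases hxL : x = L
  · have h1 : (1:ℕ) ∈ Finset.Icc 1 L := by simp [Finset.mem_Icc]; omega
    have hL : L ∈ Finset.Icc 1 L := by simp [Finset.mem_Icc]; omega
    have k1 := acomm_c_ta L δ c cdag car_dc 1 h1 u (by simp [Finset.mem_Icc]; omega)
    have kL := acomm_c_ta L δ c cdag car_dc L hL u (by simp [Finset.mem_Icc]; omega)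
    unfold aOp
    rw [if_pos hxL]
    rw [add_mul, mul_add, smul_mul_assoc, smul_mul_assoc, mul_smul_comm, mul_smul_comm]
    have e : (wR δ 2 : ℂ) • (c 1 * taOp L δ cdag u) + (wR δ (L-1) : ℂ) • (c L * taOp L δ cdag u)
        + ((wR δ 2 : ℂ) • (taOp L δ cdag u * c 1) + (wR δ (L-1) : ℂ) • (taOp L δ cdag u * c L))
        = (wR δ 2 : ℂ) • (c 1 * taOp L δ cdag u + taOp L δ cdag u * c 1)
          + (wR δ (L-1) : ℂ) • (c L * taOp L δ cdag u + taOp L δ cdag u * c L) := by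
      rw [smul_add, smul_add]; abel
    rw [e, k1, kL, smul_smul, smul_smul, ← add_smul]
    congr 1
    have h12 : (wR δ 1 : ℂ) * (wR δ 2 : ℂ) = (Real.sin δ : ℂ)/2 := by
      have h := wmul δ 1; exact_mod_cast h
    have h34 : (wR δ (L-1) : ℂ) * (wR δ L : ℂ) = (Real.sin δ : ℂ)/2 := by
      have h := wmul δ (L-1)
      rw [show L - 1 + 1 = L by omega] at h
      exact_mod_cast h
    have key := scal_add (Real.sin δ : ℂ) (sgC L u 1) (sgC L u L)
      (wR δ 1 : ℂ) (wR δ 2 : ℂ) (wR δ (L-1) : ℂ) (wR δ L : ℂ) hs h12 h34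
    rw [key]
    unfold sgC
    by_cases huL : u = L
    · rw [if_pos huL, if_pos huL, if_pos (huL.trans hxL.symm)]; norm_num
    · rw [if_neg huL, if_neg huL, if_pos (by omega), if_neg (by omega),
        if_neg (by rw [hxL]; exact huL)]
      norm_num
  · have hx1 : x ∈ Finset.Icc 1 L := by simp [Finset.mem_Icc]; omega
    have hx2 : x + 1 ∈ Finset.Icc 1 L := by simp [Finset.mem_Icc]; omega
    have k1 := acomm_c_ta L δ c cdag car_dc x hx1 u (by simp [Finset.mem_Icc]; omega)
    have k2 := acomm_c_ta L δ c cdag car_dc (x+1) hx2 u (by simp [Finset.mem_Icc]; omega)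
    unfold aOp
    rw [if_neg hxL]
    rw [sub_mul, mul_sub, smul_mul_assoc, smul_mul_assoc, mul_smul_comm, mul_smul_comm]
    have e : (wR δ (x+1) : ℂ) • (c x * taOp L δ cdag u) - (wR δ x : ℂ) • (c (x+1) * taOp L δ cdag u)
        + ((wR δ (x+1) : ℂ) • (taOp L δ cdag u * c x) - (wR δ x : ℂ) • (taOp L δ cdag u * c (x+1)))
        = (wR δ (x+1) : ℂ) • (c x * taOp L δ cdag u + taOp L δ cdag u * c x)
          - (wR δ x : ℂ) • (c (x+1) * taOp L δ cdag u + taOp L δ cdag u * c (x+1)) := by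
      rw [smul_add, smul_add]; abel
    rw [e, k1, k2, smul_smul, smul_smul, ← sub_smul]
    congr 1
    have hww : (wR δ x : ℂ) * (wR δ (x+1) : ℂ) = (Real.sin δ : ℂ)/2 := by
      have h := wmul δ x; exact_mod_cast h
    have key := scal_sub (Real.sin δ : ℂ) (sgC L u x) (sgC L u (x+1))
      (wR δ x : ℂ) (wR δ (x+1) : ℂ) hs hww
    rw [key]
    unfold sgC
    by_cases huL : u = L
    · rw [if_pos huL, if_pos huL, if_neg (by omega)]; norm_num
    · rw [if_neg huL, if_neg huL]
      by_cases hux : u = x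
      · rw [if_pos (by omega), if_neg (by omega), if_pos hux]; norm_num
      · rw [if_neg hux]
        by_cases hle : x ≤ u
        · rw [if_pos hle, if_pos (by omega)]; norm_num
        · rw [if_neg hle, if_neg (by omega)]; norm_num

lemma comm_zeta (L : ℕ) (hL3 : 3 ≤ L) (δ : ℝ)
    (hδ0 : 0 < δ) (hδ1 : δ ≤ Real.pi / 2) (c cdag : ℕ → Module.End ℂ V)
    (car_dc : ∀ x ∈ Finset.Icc 1 L, ∀ y ∈ Finset.Icc 1 L,
      cdag x * c y + c y * cdag x = if x = y then 1 else 0)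
    (x : ℕ) (hx : x ∈ Finset.Icc 1 L) :
    aOp L δ c x * zetaDag L δ cdag - zetaDag L δ cdag * aOp L δ c x
      = ∑ v ∈ Finset.Icc 1 L, (Fc L δ x v - Fc L δ v x) • taOp L δ cdag v := by
  unfold zetaDag
  rw [Finset.mul_sum, Finset.sum_mul, ← Finset.sum_sub_distrib]
  have step1 : ∀ u ∈ Finset.Icc 1 L,
      (aOp L δ c x * ∑ v ∈ Finset.Icc 1 L, Fc L δ u v • (taOp L δ cdag u * taOp L δ cdag v))
        - (∑ v ∈ Finset.Icc 1 L, Fc L δ u v • (taOp L δ cdag u * taOp L δ cdag v)) * aOp L δ c x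
      = ∑ v ∈ Finset.Icc 1 L,
          ((if u = x then Fc L δ u v • taOp L δ cdag v else 0)
            - (if v = x then Fc L δ u v • taOp L δ cdag u else 0)) := by
    intro u hu
    rw [Finset.mul_sum, Finset.sum_mul, ← Finset.sum_sub_distrib]
    refine Finset.sum_congr rfl fun v hv => ?_
    rw [mul_smul_comm, smul_mul_assoc, ← smul_sub]
    rw [comm_mul (aOp L δ c x) (taOp L δ cdag u) (taOp L δ cdag v)
      (if u = x then (1:ℂ) else 0) (if v = x then (1:ℂ) else 0)
      (acomm_a_ta L hL3 δ hδ0 hδ1 c cdag car_dc x hx u hu)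
      (acomm_a_ta L hL3 δ hδ0 hδ1 c cdag car_dc x hx v hv)]
    simp only [smul_sub, smul_smul, mul_ite, mul_one, mul_zero, ite_smul, zero_smul,
      one_smul, smul_ite, smul_zero]
  rw [Finset.sum_congr rfl step1]
  rw [Finset.sum_congr rfl (fun u (hu : u ∈ Finset.Icc 1 L) => Finset.sum_sub_distrib _ _)]
  rw [Finset.sum_sub_distrib]
  have e1 : ∑ u ∈ Finset.Icc 1 L, ∑ v ∈ Finset.Icc 1 L,
      (if u = x then Fc L δ u v • taOp L δ cdag v else 0)
      = ∑ v ∈ Finset.Icc 1 L, Fc L δ x v • taOp L δ cdag v := by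
    have h : ∀ u ∈ Finset.Icc 1 L,
        (∑ v ∈ Finset.Icc 1 L, if u = x then Fc L δ u v • taOp L δ cdag v else 0)
        = if u = x then ∑ v ∈ Finset.Icc 1 L, Fc L δ u v • taOp L δ cdag v else 0 := by
      intro u _; split_ifs <;> simp
    rw [Finset.sum_congr rfl h, Finset.sum_ite_eq' (Finset.Icc 1 L) x, if_pos hx]
  have e2 : ∑ u ∈ Finset.Icc 1 L, ∑ v ∈ Finset.Icc 1 L,
      (if v = x then Fc L δ u v • taOp L δ cdag u else 0)
      = ∑ u ∈ Finset.Icc 1 L, Fc L δ u x • taOp L δ cdag u := by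
    refine Finset.sum_congr rfl fun u _ => ?_
    rw [Finset.sum_ite_eq' (Finset.Icc 1 L) x, if_pos hx]
  rw [e1, e2, ← Finset.sum_sub_distrib]
  exact Finset.sum_congr rfl fun v _ => (sub_smul _ _ _).symm

/-- Collapse a sum whose coefficients vanish outside two points. -/
lemma collapse (L : ℕ) (g : ℕ → ℂ) (T : ℕ → Module.End ℂ V) (p q : ℕ)
    (hp : p ∈ Finset.Icc 1 L) (hq : q ∈ Finset.Icc 1 L) (hne : p ≠ q)
    (hoff : ∀ v ∈ Finset.Icc 1 L, v ≠ p → v ≠ q → g v = 0) :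
    ∑ v ∈ Finset.Icc 1 L, g v • T v = g p • T p + g q • T q := by
  have hsub : ({p, q} : Finset ℕ) ⊆ Finset.Icc 1 L := by
    intro t ht; simp at ht; rcases ht with h | h <;> simp [h, Finset.mem_Icc] <;>
      [exact (Finset.mem_Icc.mp hp); exact (Finset.mem_Icc.mp hq)]
  rw [← Finset.sum_subset hsub (by
    intro v hv hvn
    simp only [Finset.mem_insert, Finset.mem_singleton, not_or] at hvn
    rw [hoff v hv hvn.1 hvn.2, zero_smul])]
  rw [Finset.sum_pair hne]

/-- Combine two `taOp`s into a two-term sum of `cdag`s. -/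
lemma combo (L : ℕ) (δ : ℝ) (d : ℕ → Module.End ℂ V) (p q : ℕ)
    (hp : p ∈ Finset.Icc 1 L) (hq : q ∈ Finset.Icc 1 L) (α β : ℂ) (y1 y2 : ℕ)
    (hy1 : y1 ∈ Finset.Icc 1 L) (hy2 : y2 ∈ Finset.Icc 1 L) (hne : y1 ≠ y2)
    (hoff : ∀ y ∈ Finset.Icc 1 L, y ≠ y1 → y ≠ y2 →
      α * sgC L p y + β * sgC L q y = 0) :
    α • taOp L δ d p + β • taOp L δ d q
      = (((Real.sin δ : ℂ))⁻¹ * (α * sgC L p y1 + β * sgC L q y1) * (wR δ y1 : ℂ)) • d y1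
        + (((Real.sin δ : ℂ))⁻¹ * (α * sgC L p y2 + β * sgC L q y2) * (wR δ y2 : ℂ)) • d y2 := by
  rw [ta_expand L δ d p hp, ta_expand L δ d q hq, smul_smul, smul_smul,
    Finset.smul_sum, Finset.smul_sum, ← Finset.sum_add_distrib]
  have hterm : ∀ y ∈ Finset.Icc 1 L,
      (α * ((Real.sin δ : ℂ))⁻¹) • ((sgC L p y * (wR δ y : ℂ)) • d y)
        + (β * ((Real.sin δ : ℂ))⁻¹) • ((sgC L q y * (wR δ y : ℂ)) • d y)
      = (((Real.sin δ : ℂ))⁻¹ * (α * sgC L p y + β * sgC L q y) * (wR δ y : ℂ)) • d y := by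
    intro y _
    rw [smul_smul, smul_smul, ← add_smul]
    congr 1; ring
  rw [Finset.sum_congr rfl hterm]
  exact collapse L _ _ y1 y2 hy1 hy2 hne (by
    intro y hy h1 h2
    rw [hoff y hy h1 h2, mul_zero, zero_mul])

lemma final_sum (L : ℕ) (hL3 : 3 ≤ L) (δ : ℝ)
    (hδ0 : 0 < δ) (hδ1 : δ ≤ Real.pi / 2) (d : ℕ → Module.End ℂ V)
    (x : ℕ) (hx : x ∈ Finset.Icc 1 L) :
    ∑ v ∈ Finset.Icc 1 L, (Fc L δ x v - Fc L δ v x) • taOp L δ d v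
      = (-2 : ℂ) • bOp L δ d x := by
  have hs := sin_ne δ hδ0 hδ1
  simp only [Finset.mem_Icc] at hx
  set s : ℂ := (Real.sin δ : ℂ) with hsdef
  have hmem : ∀ t : ℕ, 1 ≤ t → t ≤ L → t ∈ Finset.Icc 1 L := by
    intro t h1 h2; simp [Finset.mem_Icc]; omega
  have hs2 : Complex.sin (δ : ℂ) ≠ 0 := by rw [← Complex.ofReal_sin]; exact hs
  by_cases hx1 : x = 1
  · subst hx1
    have hcol := collapse L (fun v => Fc L δ 1 v - Fc L δ v 1) (taOp L δ d) 2 L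
      (hmem 2 (by omega) (by omega)) (hmem L (by omega) (by omega)) (by omega)
      (by
        intro v hv hv2 hvL
        simp only [Finset.mem_Icc] at hv
        show Fc L δ 1 v - Fc L δ v 1 = 0
        unfold Fc
        rw [if_neg (by omega), if_neg (by omega), if_neg (by omega), if_neg (by omega)]
        ring)
    rw [hcol]
    have g2 : Fc L δ 1 2 - Fc L δ 2 1 = -s := by
      unfold Fc
      rw [if_pos (by omega), if_neg (by omega), if_pos (by omega)]
      rw [hsdef]; ring
    have gL : Fc L δ 1 L - Fc L δ L 1 = -s := by
      unfold Fc
      rw [if_pos (by omega), if_neg (by omega), if_pos (by omega)]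
      rw [hsdef]; ring
    rw [g2, gL]
    have hcmb := combo L δ d 2 L (hmem 2 (by omega) (by omega)) (hmem L (by omega) (by omega))
      (-s) (-s) 1 2 (hmem 1 (by omega) (by omega)) (hmem 2 (by omega) (by omega)) (by omega)
      (by
        intro y hy h1 h2
        simp only [Finset.mem_Icc] at hy
        unfold sgC
        rw [if_neg (by omega), if_neg (by omega), if_pos rfl]
        ring)
    have e1 : sgC L 2 1 = 1 := by unfold sgC; rw [if_neg (by omega), if_pos (by omega)]
    have e2 : sgC L L 1 = 1 := by unfold sgC; rw [if_pos rfl]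
    have e3 : sgC L 2 2 = 1 := by unfold sgC; rw [if_neg (by omega), if_pos (by omega)]
    have e4 : sgC L L 2 = 1 := by unfold sgC; rw [if_pos rfl]
    rw [e1, e2, e3, e4] at hcmb
    rw [hcmb]
    unfold bOp
    rw [if_neg (by omega)]
    match_scalars <;> (simp only [hsdef]; push_cast; field_simp; try ring)
  · by_cases hxL : x = L
    · have hxL' := hxL.symm
      subst hxL'
      have hcol := collapse L (fun v => Fc L δ L v - Fc L δ v L) (taOp L δ d) 1 (L-1)
        (hmem 1 (by omega) (by omega)) (hmem (L-1) (by omega) (by omega)) (by omega)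
        (by
          intro v hv hv1 hvL1
          simp only [Finset.mem_Icc] at hv
          show Fc L δ L v - Fc L δ v L = 0
          unfold Fc
          rw [if_neg (by omega), if_neg (by omega), if_neg (by omega), if_neg (by omega)]
          ring)
      rw [hcol]
      have g1 : Fc L δ L 1 - Fc L δ 1 L = s := by
        unfold Fc
        rw [if_neg (by omega), if_pos (by omega), if_pos (by omega)]
        rw [hsdef]; ring
      have gL1 : Fc L δ L (L-1) - Fc L δ (L-1) L = s := by
        unfold Fc
        rw [if_neg (by omega), if_pos (by omega), if_pos (by omega)]
        rw [hsdef]; ring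
      rw [g1, gL1]
      have hcmb := combo L δ d 1 (L-1) (hmem 1 (by omega) (by omega))
        (hmem (L-1) (by omega) (by omega)) s s 1 L
        (hmem 1 (by omega) (by omega)) (hmem L (by omega) (by omega)) (by omega)
        (by
          intro y hy h1 hL'
          simp only [Finset.mem_Icc] at hy
          unfold sgC
          rw [if_neg (by omega), if_neg (by omega), if_neg (by omega), if_pos (by omega)]
          ring)
      have e1 : sgC L 1 1 = 1 := by unfold sgC; rw [if_neg (by omega), if_pos (by omega)]
      have e2 : sgC L (L-1) 1 = 1 := by unfold sgC; rw [if_neg (by omega), if_pos (by omega)]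
      have e3 : sgC L 1 L = -1 := by unfold sgC; rw [if_neg (by omega), if_neg (by omega)]
      have e4 : sgC L (L-1) L = -1 := by unfold sgC; rw [if_neg (by omega), if_neg (by omega)]
      rw [e1, e2, e3, e4] at hcmb
      rw [hcmb]
      unfold bOp
      rw [if_pos rfl]
      match_scalars <;> (simp only [hsdef]; push_cast; field_simp; try ring)
    · have hcol := collapse L (fun v => Fc L δ x v - Fc L δ v x) (taOp L δ d) (x-1) (x+1)
        (hmem (x-1) (by omega) (by omega)) (hmem (x+1) (by omega) (by omega)) (by omega)
        (by
          intro v hv hvm hvp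
          simp only [Finset.mem_Icc] at hv
          show Fc L δ x v - Fc L δ v x = 0
          unfold Fc
          rw [if_neg (by omega), if_neg (by omega), if_neg (by omega), if_neg (by omega)]
          ring)
      rw [hcol]
      have gm : Fc L δ x (x-1) - Fc L δ (x-1) x = s := by
        unfold Fc
        rw [if_neg (by omega), if_pos (by omega), if_pos (by omega)]
        rw [hsdef]; ring
      have gp : Fc L δ x (x+1) - Fc L δ (x+1) x = -s := by
        unfold Fc
        rw [if_pos (by omega), if_neg (by omega), if_pos (by omega)]
        rw [hsdef]; ring
      rw [gm, gp]
      have hcmb := combo L δ d (x-1) (x+1) (hmem (x-1) (by omega) (by omega))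
        (hmem (x+1) (by omega) (by omega)) s (-s) x (x+1)
        (hmem x (by omega) (by omega)) (hmem (x+1) (by omega) (by omega)) (by omega)
        (by
          intro y hy hyx hyx1
          simp only [Finset.mem_Icc] at hy
          unfold sgC
          by_cases hc : y ≤ x - 1
          · rw [if_neg (by omega), if_pos hc]
            by_cases hc2 : x + 1 = L
            · rw [if_pos hc2]; ring
            · rw [if_neg hc2, if_pos (by omega)]; ring
          · rw [if_neg (by omega), if_neg hc, if_neg (by omega), if_neg (by omega)]
            ring)
      have e1 : sgC L (x-1) x = -1 := by unfold sgC; rw [if_neg (by omega), if_neg (by omega)]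
      have e2 : sgC L (x+1) x = 1 := by
        unfold sgC
        by_cases hc2 : x + 1 = L
        · rw [if_pos hc2]
        · rw [if_neg hc2, if_pos (by omega)]
      have e3 : sgC L (x-1) (x+1) = -1 := by
        unfold sgC; rw [if_neg (by omega), if_neg (by omega)]
      have e4 : sgC L (x+1) (x+1) = 1 := by
        unfold sgC
        by_cases hc2 : x + 1 = L
        · rw [if_pos hc2]
        · rw [if_neg hc2, if_pos (by omega)]
      rw [e1, e2, e3, e4] at hcmb
      rw [hcmb]
      unfold bOp
      rw [if_neg hxL]
      match_scalars <;> (simp only [hsdef]; push_cast; field_simp; try ring)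

/-- for every `x ∈ {1,…,L}`, `a_x ζ† − ζ† a_x = −2 b_x†`. -/
theorem statement6 (L : ℕ) (hL3 : 3 ≤ L) (hLodd : Odd L)
    (δ : ℝ) (hδ0 : 0 < δ) (hδ1 : δ ≤ Real.pi / 2)
    (c cdag : ℕ → Module.End ℂ V)
    (car_cc : ∀ x ∈ Finset.Icc 1 L, ∀ y ∈ Finset.Icc 1 L, c x * c y + c y * c x = 0)
    (car_dd : ∀ x ∈ Finset.Icc 1 L, ∀ y ∈ Finset.Icc 1 L,
      cdag x * cdag y + cdag y * cdag x = 0)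
    (car_dc : ∀ x ∈ Finset.Icc 1 L, ∀ y ∈ Finset.Icc 1 L,
      cdag x * c y + c y * cdag x = if x = y then 1 else 0) :
    ∀ x ∈ Finset.Icc 1 L,
      aOp L δ c x * zetaDag L δ cdag - zetaDag L δ cdag * aOp L δ c x
        = (-2 : ℂ) • bOp L δ cdag x := by
  intro x hx
  rw [comm_zeta L hL3 δ hδ0 hδ1 c cdag car_dc x hx]
  exact final_sum L hL3 δ hδ0 hδ1 cdag x hx

end
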